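/- Let X be a nonempty heap, Y a subheap of X, and ω a congruence of X. The following are equivalent: (a) Y ∩ [x]_ω is a singleton for every x ∈ X; (b) there exists an idempotent heap endomorphism of X with image Y and kernel ω; (c) the map g : Y → X/ω, y ↦ [y]_ω, is a heap isomorphism. -/
import Mathlib


/-- A heap: a set with an associative Mal'tsev ternary operation. -/
structure Heap (X : Type*) where
  op : X → X → X → X
  mal1 : ∀ x y, op x x y = y
  mal2 : ∀ x y, op x y y = x
  assoc : ∀ x y z w u, op (op x y z) w u = op x y (op z w u)

/-- Let `X` be a nonempty heap, `Y` a subheap, `ω` a congruence. TFAE: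
(a) `Y ∩ [x]_ω` is a singleton for every `x`;
(b) there is an idempotent heap endomorphism of `X` with image `Y` and kernel `ω`;
(c) the map `Y → X/ω`, `y ↦ [y]_ω`, is a heap isomorphism (the map is always a
heap homomorphism, so this says it is bijective). -/
theorem stmt12 {X : Type*} (H : Heap X) (hne : Nonempty X)
    (Y : Set X) (hY : ∀ x ∈ Y, ∀ y ∈ Y, ∀ z ∈ Y, H.op x y z ∈ Y)
    (ω : X → X → Prop) (hωe : Equivalence ω)
    (hωc : ∀ x x' y y' z z', ω x x' → ω y y' → ω z z' →
      ω (H.op x y z) (H.op x' y' z')) :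
    List.TFAE
      [ ∀ x : X, ∃! y, y ∈ Y ∧ ω y x,
        ∃ f : X → X, (∀ x y z, f (H.op x y z) = H.op (f x) (f y) (f z)) ∧
          f ∘ f = f ∧ Set.range f = Y ∧ (∀ x y, f x = f y ↔ ω x y),
        Function.Bijective (fun y : Y => Quotient.mk ⟨ω, hωe⟩ (y : X)) ] := by
  tfae_have 1 → 2
  · intro ha
    simp only [ExistsUnique] at ha
    choose f hf hfu using ha
    have hfY : ∀ x, f x ∈ Y := fun x => (hf x).1
    have hfω : ∀ x, ω (f x) x := fun x => (hf x).2
    refine ⟨f, ?_, ?_, ?_, ?_⟩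
    · intro x y z
      exact (hfu (H.op x y z) _ ⟨hY _ (hfY x) _ (hfY y) _ (hfY z),
        hωc _ _ _ _ _ _ (hfω x) (hfω y) (hfω z)⟩).symm
    · funext x
      exact hfu x _ ⟨hfY (f x), hωe.trans (hfω (f x)) (hfω x)⟩
    · apply Set.eq_of_subset_of_subset
      · rintro _ ⟨x, rfl⟩; exact hfY x
      · intro y hy; exact ⟨y, (hfu y _ ⟨hy, hωe.refl _⟩).symm⟩
    · intro x y
      constructor
      · intro h
        exact hωe.trans (hωe.symm (hfω x)) (h ▸ hfω y)
      · intro h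
        exact hfu y _ ⟨hfY x, hωe.trans (hfω x) h⟩
  tfae_have 2 → 3
  · rintro ⟨f, hhom, hid, hrange, hker⟩
    have hfix : ∀ y ∈ Y, f y = y := by
      intro y hy
      obtain ⟨x, rfl⟩ := hrange ▸ hy
      exact congrFun hid x
    constructor
    · rintro ⟨y1, hy1⟩ ⟨y2, hy2⟩ h
      have : ω y1 y2 := Quotient.exact (s := ⟨ω, hωe⟩) h
      have := (hker y1 y2).2 this
      rw [hfix y1 hy1, hfix y2 hy2] at this
      exact Subtype.ext this
    · intro q
      obtain ⟨x, rfl⟩ := Quotient.exists_rep q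
      refine ⟨⟨f x, hrange ▸ ⟨x, rfl⟩⟩, ?_⟩
      exact Quotient.sound (s := ⟨ω, hωe⟩) ((hker (f x) x).1 (congrFun hid x))
  tfae_have 3 → 1
  · rintro ⟨hinj, hsurj⟩ x
    obtain ⟨⟨y, hy⟩, hq⟩ := hsurj (Quotient.mk ⟨ω, hωe⟩ x)
    refine ⟨y, ⟨hy, Quotient.exact (s := ⟨ω, hωe⟩) hq⟩, ?_⟩
    rintro y' ⟨hy', hω'⟩
    have : (⟨y', hy'⟩ : Y) = ⟨y, hy⟩ := hinj
      ((Quotient.sound (s := ⟨ω, hωe⟩) hω').trans hq.symm)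
    exact congrArg Subtype.val this
  tfae_finish
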